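/- Let δ ≥ 2, d ≥ 1, γ ≥ 0 with γ + d ≥ 2, and (γ,d) = (n_1,m_1) the first Newton polygon vertex (Case 3). The set I_f = {l > 0 : γ + l d ≤ i + l j and γ + l d ≤ l δ for all (i,j) with b_{ij} ≠ 0} satisfies: if γ > 0 then I_f = [γ/(δ-d), l_2] (nonempty iff T_1 ≤ δ), and if γ = 0 then I_f = (0, l_2], where l_2 = (n_2-n_1)/(m_1-m_2). -/
import Mathlib


/-- In Case 3 with (γ,d) = (n₁,m₁) the first vertex of the Newton polygon
and l₂ = (n₂-n₁)/(m₁-m₂) the minimum of (i-γ)/(d-j) over support points with j < d, the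
set I_f = {l > 0 : γ + ld ≤ i + lj and γ + ld ≤ lδ for all (i,j) with b_{ij} ≠ 0}
satisfies: if γ > 0 then I_f = [γ/(δ-d), l₂] (nonempty iff T₁ = l₂⁻¹γ + d ≤ δ),
and if γ = 0 then I_f = (0, l₂]. -/
theorem stmt10
    (S : Set (ℕ × ℕ)) (γ d δ n2 m2 : ℕ) (hδ : 2 ≤ δ) (hd : 1 ≤ d) (hγd : 2 ≤ γ + d)
    (hdδ : d ≤ δ) (hγδ : 0 < γ → d < δ)
    (hn : γ < n2) (hm : m2 < d)
    (hi : ∀ p ∈ S, γ ≤ p.1)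
    (hij : ∀ p ∈ S, p.1 = γ → d ≤ p.2)
    (l2 : ℝ) (hl2 : l2 = ((n2 : ℝ) - γ) / ((d : ℝ) - m2))
    (hmin : IsLeast {x : ℝ | ∃ p ∈ S, p.2 < d ∧ x = ((p.1 : ℝ) - γ) / ((d : ℝ) - p.2)} l2)
    (I : Set ℝ)
    (hI : I = {l : ℝ | 0 < l ∧ (∀ p ∈ S, (γ : ℝ) + l * d ≤ (p.1 : ℝ) + l * p.2) ∧
      (γ : ℝ) + l * d ≤ l * δ}) :
    (0 < γ → I = Set.Icc ((γ : ℝ) / ((δ : ℝ) - d)) l2 ∧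
      (I.Nonempty ↔ l2⁻¹ * γ + d ≤ (δ : ℝ))) ∧
    (γ = 0 → I = Set.Ioc 0 l2) := by
  have h1 : (γ:ℝ) < n2 := by exact_mod_cast hn
  have h2 : (m2:ℝ) < d := by exact_mod_cast hm
  have hl2pos : 0 < l2 := by rw [hl2]; exact div_pos (by linarith) (by linarith)
  have key : ∀ l : ℝ, 0 < l →
      ((∀ p ∈ S, (γ:ℝ) + l * d ≤ (p.1:ℝ) + l * p.2) ↔ l ≤ l2) := by
    intro l hl
    constructor
    · intro h
      obtain ⟨p, hpS, hpd, hpeq⟩ := hmin.1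
      have hpd' : (p.2:ℝ) < d := by exact_mod_cast hpd
      have hp := h p hpS
      rw [hpeq, le_div_iff₀ (by linarith)]
      nlinarith
    · intro h p hpS
      by_cases hc : p.2 < d
      · have hc' : (p.2:ℝ) < d := by exact_mod_cast hc
        have hle : l2 ≤ ((p.1:ℝ) - γ) / ((d:ℝ) - p.2) := hmin.2 ⟨p, hpS, hc, rfl⟩
        have hll : l ≤ ((p.1:ℝ) - γ) / ((d:ℝ) - p.2) := le_trans h hle
        rw [le_div_iff₀ (by linarith)] at hll
        nlinarith
      · push_neg at hc
        have hc' : (d:ℝ) ≤ p.2 := by exact_mod_cast hc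
        have hγp : (γ:ℝ) ≤ p.1 := by exact_mod_cast hi p hpS
        nlinarith
  constructor
  · intro hγ
    have hγ' : (0:ℝ) < γ := by exact_mod_cast hγ
    have hdδ' : (d:ℝ) < δ := by exact_mod_cast hγδ hγ
    have hqpos : 0 < (γ:ℝ) / ((δ:ℝ) - d) := div_pos hγ' (by linarith)
    have hIeq : I = Set.Icc ((γ:ℝ)/((δ:ℝ)-d)) l2 := by
      rw [hI]; ext l
      simp only [Set.mem_setOf_eq, Set.mem_Icc]
      constructor
      · rintro ⟨hl, hS, hδl⟩
        refine ⟨?_, (key l hl).mp hS⟩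
        rw [div_le_iff₀ (by linarith)]
        nlinarith
      · rintro ⟨ha, hb⟩
        have hl : 0 < l := lt_of_lt_of_le hqpos ha
        refine ⟨hl, (key l hl).mpr hb, ?_⟩
        rw [div_le_iff₀ (by linarith)] at ha
        nlinarith
    refine ⟨hIeq, ?_⟩
    rw [hIeq, Set.nonempty_Icc]
    have hinv : l2 * l2⁻¹ = 1 := mul_inv_cancel₀ hl2pos.ne'
    constructor
    · intro h
      rw [div_le_iff₀ (by linarith)] at h
      nlinarith
    · intro h
      rw [div_le_iff₀ (by linarith)]
      nlinarith
  · intro hγ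
    subst hγ
    rw [hI]; ext l
    simp only [Set.mem_setOf_eq, Set.mem_Ioc, Nat.cast_zero, zero_add]
    have hdδ' : (d:ℝ) ≤ δ := by exact_mod_cast hdδ
    constructor
    · rintro ⟨hl, hS, -⟩
      refine ⟨hl, (key l hl).mp ?_⟩
      intro p hp
      have := hS p hp
      push_cast
      linarith
    · rintro ⟨hl, hb⟩
      refine ⟨hl, ?_, by nlinarith⟩
      intro p hp
      have := (key l hl).mpr hb p hp
      push_cast at this
      linarith
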